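/- Tail-part maximal bound: under the hypotheses below, if n₀ is such that 2 M_p Σ_{n=n₀}^{∞} n^{-p} ≤ ε δ, then with probability at least 1 − ε one has Σ_{i=n₀}^{n} |Z_i − E[Z_i | F_{i-1}]| ≤ 2nδ for all n ≥ n₀. -/

import Mathlib

open MeasureTheory
open scoped ENNReal

/-- Tail-part maximal bound: if `2 M_p ∑_{n ≥ n₀} n^{-p} ≤ ε δ`, then with
probability at least `1 - ε`, `∑_{i=n₀}^n |Z_i − E[Z_i|F_{i-1}]| ≤ 2nδ` for all
`n ≥ n₀`. -/
theorem tail_part_maximal_bound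
    {Ω : Type*} {m0 : MeasurableSpace Ω} {μ : Measure Ω} [IsProbabilityMeasure μ]
    (ℱ : Filtration ℕ m0) (X : ℕ → Ω → ℝ) (hadp : Adapted ℱ X)
    (p Mp : ℝ) (hp : 1 < p)
    (hmem : ∀ n, MemLp (X n) (ENNReal.ofReal p) μ)
    (hMp : ∀ n, ∫ ω, |X n ω| ^ p ∂μ ≤ Mp)
    (Z : ℕ → Ω → ℝ)
    (hZ : ∀ n ω, Z n ω = if (n : ℝ) < |X n ω| then X n ω else 0)
    (ε δ : ℝ) (hε : 0 < ε) (hδ : 0 < δ)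
    (n₀ : ℕ) (hn₀ : 1 ≤ n₀)
    (hsum : 2 * Mp * ∑' n : ℕ, ((n₀ + n : ℕ) : ℝ) ^ (-p) ≤ ε * δ) :
    ENNReal.ofReal (1 - ε) ≤
      μ {ω | ∀ n, n₀ ≤ n →
        ∑ i ∈ Finset.Icc n₀ n, |Z i ω - (μ[Z i | ℱ (i - 1)]) ω| ≤ 2 * n * δ} := by
  classical
  have hp0 : (0:ℝ) < p := by linarith
  have hple1 : (1:ℝ≥0∞) ≤ ENNReal.ofReal p := by
    rw [← ENNReal.ofReal_one]
    exact ENNReal.ofReal_le_ofReal hp.le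
  have hMp0 : 0 ≤ Mp :=
    le_trans (integral_nonneg fun ω => Real.rpow_nonneg (abs_nonneg _) p) (hMp 0)
  -- basic properties of X and Z
  have hXmeas : ∀ n, StronglyMeasurable (X n) := fun n => ((hadp n).mono (ℱ.le n) le_rfl).stronglyMeasurable
  have hXint : ∀ n, Integrable (X n) μ := fun n => (hmem n).integrable hple1
  have hZle : ∀ n ω, |Z n ω| ≤ |X n ω| := by
    intro n ω
    rw [hZ n ω]
    split
    · exact le_refl _
    · simp [abs_nonneg]
  have hZmeas : ∀ n, StronglyMeasurable (Z n) := by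
    intro n
    have : Z n = fun ω => if (n : ℝ) < |X n ω| then X n ω else 0 := funext (hZ n)
    rw [this]
    apply StronglyMeasurable.ite (f := X n) (g := fun _ => (0:ℝ))
      ?_ (hXmeas n) stronglyMeasurable_const
    exact measurableSet_lt measurable_const (hXmeas n).measurable.abs
  have hZint : ∀ n, Integrable (Z n) μ := by
    intro n
    refine (hXint n).abs.mono (hZmeas n).aestronglyMeasurable ?_
    filter_upwards with ω
    simpa [abs_abs] using hZle n ω
  -- the deviation function
  set D : ℕ → Ω → ℝ := fun i ω => |Z i ω - (μ[Z i | ℱ (i - 1)]) ω| with hD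
  have hDnonneg : ∀ i ω, 0 ≤ D i ω := fun i ω => abs_nonneg _
  have hDmeas : ∀ i, Measurable (D i) := fun i =>
    ((hZmeas i).measurable.sub
      (stronglyMeasurable_condExp.mono (ℱ.le _)).measurable).abs
  have hDint : ∀ i, Integrable (D i) μ := fun i => ((hZint i).sub integrable_condExp).abs
  -- the key L¹ bound for D i, i ≥ 1
  have hDbound : ∀ i : ℕ, 1 ≤ i → ∫ ω, D i ω ∂μ ≤ 2 * Mp * (i : ℝ) ^ (1 - p) := by
    intro i hi
    have hi0 : (0:ℝ) < (i:ℝ) := by exact_mod_cast hi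
    have hi1 : (1:ℝ) ≤ (i:ℝ) := by exact_mod_cast hi
    -- ∫ |Z i| ≤ Mp * i^(1-p)
    have hXp_int : Integrable (fun ω => |X i ω| ^ p) μ := by
      have := (hmem i).integrable_norm_rpow (by positivity)
        (by simp)
      simpa [ENNReal.toReal_ofReal hp0.le, Real.norm_eq_abs] using this
    have hptwise : ∀ ω, |Z i ω| * (i:ℝ) ^ (p - 1) ≤ |X i ω| ^ p := by
      intro ω
      rw [hZ i ω]
      split
      · rename_i h
        have hXpos : (0:ℝ) < |X i ω| := lt_of_le_of_lt hi0.le h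
        have : (i:ℝ) ^ (p - 1) ≤ |X i ω| ^ (p - 1) :=
          Real.rpow_le_rpow hi0.le h.le (by linarith)
        calc |X i ω| * (i:ℝ) ^ (p - 1) ≤ |X i ω| * |X i ω| ^ (p - 1) := by
              exact mul_le_mul_of_nonneg_left this (abs_nonneg _)
          _ = |X i ω| ^ p := by
              rw [← Real.rpow_one_add' hXpos.le (by intro h'; simp at h'; linarith)]
              ring_nf
      · simp only [abs_zero, zero_mul]
        exact Real.rpow_nonneg (abs_nonneg _) p
    have hZi_int : ∫ ω, |Z i ω| ∂μ ≤ Mp * (i:ℝ) ^ (1 - p) := by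
      have h1 : (∫ ω, |Z i ω| ∂μ) * (i:ℝ) ^ (p - 1) ≤ Mp := by
        rw [← integral_mul_const]
        exact le_trans (integral_mono ((hZint i).abs.mul_const _) hXp_int hptwise) (hMp i)
      have hipow : (0:ℝ) < (i:ℝ) ^ (p - 1) := Real.rpow_pos_of_pos hi0 _
      have := (div_le_div_iff_of_pos_right hipow).2 h1
      rw [mul_div_assoc, div_self hipow.ne', mul_one] at this
      calc ∫ ω, |Z i ω| ∂μ ≤ Mp / (i:ℝ) ^ (p - 1) := this
        _ = Mp * (i:ℝ) ^ (1 - p) := by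
            rw [div_eq_mul_inv, ← Real.rpow_neg hi0.le]
            ring_nf
    -- conditional expectation contraction
    have hcond : ∫ ω, |(μ[Z i | ℱ (i - 1)]) ω| ∂μ ≤ ∫ ω, |Z i ω| ∂μ :=
      integral_abs_condExp_le (Z i)
    have habs : ∀ ω, D i ω ≤ |Z i ω| + |(μ[Z i | ℱ (i - 1)]) ω| := fun ω =>
      abs_sub _ _
    calc ∫ ω, D i ω ∂μ
        ≤ ∫ ω, (|Z i ω| + |(μ[Z i | ℱ (i - 1)]) ω|) ∂μ :=
          integral_mono (hDint i) ((hZint i).abs.add integrable_condExp.abs) habs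
      _ = (∫ ω, |Z i ω| ∂μ) + ∫ ω, |(μ[Z i | ℱ (i - 1)]) ω| ∂μ :=
          integral_add (hZint i).abs integrable_condExp.abs
      _ ≤ (∫ ω, |Z i ω| ∂μ) + ∫ ω, |Z i ω| ∂μ := by linarith
      _ ≤ 2 * Mp * (i:ℝ) ^ (1 - p) := by linarith
  -- the ENNReal-valued dominating series
  set G : ℕ → Ω → ℝ≥0∞ := fun i ω => ((i : ℝ≥0∞))⁻¹ * ENNReal.ofReal (D i ω) with hG
  have hGmeas : ∀ i, Measurable (G i) := by
    intro i
    exact ((hDmeas i).ennreal_ofReal).const_mul _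
  set F : Ω → ℝ≥0∞ := fun ω => ∑' k : ℕ, G (n₀ + k) ω with hF
  have hFmeas : Measurable F := Measurable.ennreal_tsum fun k => hGmeas (n₀ + k)
  -- ∫⁻ G i ≤ ofReal (2 Mp i^(-p)) for i ≥ 1
  have hGint : ∀ i : ℕ, 1 ≤ i →
      ∫⁻ ω, G i ω ∂μ ≤ ENNReal.ofReal (2 * Mp * (i:ℝ) ^ (-p)) := by
    intro i hi
    have hi0 : (0:ℝ) < (i:ℝ) := by exact_mod_cast hi
    have hlin : ∫⁻ ω, ENNReal.ofReal (D i ω) ∂μ = ENNReal.ofReal (∫ ω, D i ω ∂μ) :=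
      (ofReal_integral_eq_lintegral_ofReal (hDint i)
        (Filter.Eventually.of_forall fun ω => hDnonneg i ω)).symm
    calc ∫⁻ ω, G i ω ∂μ = ((i : ℝ≥0∞))⁻¹ * ∫⁻ ω, ENNReal.ofReal (D i ω) ∂μ :=
          lintegral_const_mul _ ((hDmeas i).ennreal_ofReal)
      _ = ((i : ℝ≥0∞))⁻¹ * ENNReal.ofReal (∫ ω, D i ω ∂μ) := by rw [hlin]
      _ ≤ ((i : ℝ≥0∞))⁻¹ * ENNReal.ofReal (2 * Mp * (i:ℝ) ^ (1 - p)) :=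
          mul_le_mul_right (ENNReal.ofReal_le_ofReal (hDbound i hi)) _
      _ = ENNReal.ofReal ((i:ℝ)⁻¹) * ENNReal.ofReal (2 * Mp * (i:ℝ) ^ (1 - p)) := by
          rw [ENNReal.ofReal_inv_of_pos hi0, ENNReal.ofReal_natCast]
      _ = ENNReal.ofReal ((i:ℝ)⁻¹ * (2 * Mp * (i:ℝ) ^ (1 - p))) :=
          (ENNReal.ofReal_mul (by positivity)).symm
      _ = ENNReal.ofReal (2 * Mp * (i:ℝ) ^ (-p)) := by
          congr 1
          have : (i:ℝ) ^ (1 - p) = (i:ℝ) * (i:ℝ) ^ (-p) := by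
            rw [← Real.rpow_one_add' hi0.le (by intro h'; linarith [h'] )]
            ring_nf
          rw [this]
          field_simp
  -- summability of the tail series
  have hsummable : Summable (fun k : ℕ => 2 * Mp * ((n₀ + k : ℕ) : ℝ) ^ (-p)) := by
    apply Summable.mul_left
    have hbase : Summable (fun n : ℕ => (n : ℝ) ^ (-p)) :=
      Real.summable_nat_rpow.mpr (by linarith)
    have := (summable_nat_add_iff n₀).2 hbase
    apply this.congr
    intro k
    congr 2
    ring
  -- total lintegral bound
  have hFint : ∫⁻ ω, F ω ∂μ ≤ ENNReal.ofReal (ε * δ) := by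
    rw [hF]
    rw [lintegral_tsum fun k => (hGmeas (n₀ + k)).aemeasurable]
    calc ∑' k : ℕ, ∫⁻ ω, G (n₀ + k) ω ∂μ
        ≤ ∑' k : ℕ, ENNReal.ofReal (2 * Mp * ((n₀ + k : ℕ) : ℝ) ^ (-p)) :=
          ENNReal.tsum_le_tsum fun k => hGint (n₀ + k) (le_trans hn₀ (Nat.le_add_right _ _))
      _ = ENNReal.ofReal (∑' k : ℕ, 2 * Mp * ((n₀ + k : ℕ) : ℝ) ^ (-p)) :=
          (ENNReal.ofReal_tsum_of_nonneg
            (fun k => by positivity) hsummable).symm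
      _ ≤ ENNReal.ofReal (ε * δ) := by
          apply ENNReal.ofReal_le_ofReal
          rw [tsum_mul_left]
          exact hsum
  -- Markov's inequality
  set bad : Set Ω := {ω | ENNReal.ofReal δ ≤ F ω} with hbad
  have hbadmeas : MeasurableSet bad := measurableSet_le measurable_const hFmeas
  have hδ0 : ENNReal.ofReal δ ≠ 0 := (ENNReal.ofReal_pos.mpr hδ).ne'
  have hmarkov : μ bad ≤ ENNReal.ofReal ε := by
    calc μ bad ≤ (∫⁻ ω, F ω ∂μ) / ENNReal.ofReal δ :=
          meas_ge_le_lintegral_div hFmeas.aemeasurable hδ0 ENNReal.ofReal_ne_top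
      _ ≤ ENNReal.ofReal (ε * δ) / ENNReal.ofReal δ :=
          ENNReal.div_le_div_right hFint _
      _ = ENNReal.ofReal ε := by
          rw [ENNReal.ofReal_mul hε.le, mul_div_assoc,
            ENNReal.div_self hδ0 ENNReal.ofReal_ne_top, mul_one]
  -- the complement of bad is contained in the target set
  have hsubset : badᶜ ⊆ {ω | ∀ n, n₀ ≤ n →
      ∑ i ∈ Finset.Icc n₀ n, |Z i ω - (μ[Z i | ℱ (i - 1)]) ω| ≤ 2 * n * δ} := by
    intro ω hω n hn
    have hFω : F ω < ENNReal.ofReal δ := lt_of_not_ge hω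
    have hn1 : (1:ℝ) ≤ (n:ℝ) := by exact_mod_cast le_trans hn₀ hn
    -- step 1 : the ENNReal bound
    have key : ENNReal.ofReal (∑ i ∈ Finset.Icc n₀ n, D i ω) ≤
        ENNReal.ofReal ((n:ℝ) * δ) := by
      rw [ENNReal.ofReal_sum_of_nonneg (fun i _ => hDnonneg i ω)]
      have step1 : ∀ i ∈ Finset.Icc n₀ n,
          ENNReal.ofReal (D i ω) ≤ (n : ℝ≥0∞) * G i ω := by
        intro i hi
        rw [Finset.mem_Icc] at hi
        have hi0 : (i : ℝ≥0∞) ≠ 0 := Nat.cast_ne_zero.mpr (by omega)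
        have h1 : (1 : ℝ≥0∞) ≤ (n : ℝ≥0∞) * ((i : ℝ≥0∞))⁻¹ := by
          rw [← ENNReal.mul_inv_cancel hi0 (ENNReal.natCast_ne_top i)]
          exact mul_le_mul_left (by exact_mod_cast hi.2) _
        calc ENNReal.ofReal (D i ω) = 1 * ENNReal.ofReal (D i ω) := (one_mul _).symm
          _ ≤ ((n : ℝ≥0∞) * ((i : ℝ≥0∞))⁻¹) * ENNReal.ofReal (D i ω) :=
              mul_le_mul_left h1 _
          _ = (n : ℝ≥0∞) * G i ω := by rw [hG]; ring
      calc ∑ i ∈ Finset.Icc n₀ n, ENNReal.ofReal (D i ω)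
          ≤ ∑ i ∈ Finset.Icc n₀ n, (n : ℝ≥0∞) * G i ω := Finset.sum_le_sum step1
        _ = (n : ℝ≥0∞) * ∑ i ∈ Finset.Icc n₀ n, G i ω := (Finset.mul_sum _ _ _).symm
        _ ≤ (n : ℝ≥0∞) * F ω := by
            apply mul_le_mul_right
            rw [hF]
            have : ∑ i ∈ Finset.Icc n₀ n, G i ω =
                ∑ k ∈ Finset.range (n + 1 - n₀), G (n₀ + k) ω := by
              rw [← Finset.Ico_add_one_right_eq_Icc, Finset.sum_Ico_eq_sum_range]
            rw [this]
            exact ENNReal.sum_le_tsum _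
        _ ≤ (n : ℝ≥0∞) * ENNReal.ofReal δ := mul_le_mul_right hFω.le _
        _ = ENNReal.ofReal ((n:ℝ) * δ) := by
            rw [ENNReal.ofReal_mul (by positivity), ENNReal.ofReal_natCast]
    have h2 : ∑ i ∈ Finset.Icc n₀ n, D i ω ≤ (n:ℝ) * δ :=
      (ENNReal.ofReal_le_ofReal_iff (by positivity)).mp key
    calc ∑ i ∈ Finset.Icc n₀ n, |Z i ω - (μ[Z i | ℱ (i - 1)]) ω| ≤ (n:ℝ) * δ := h2
      _ ≤ 2 * n * δ := by nlinarith
  -- conclude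
  calc ENNReal.ofReal (1 - ε) = 1 - ENNReal.ofReal ε := by
        rw [ENNReal.ofReal_sub _ hε.le, ENNReal.ofReal_one]
    _ ≤ 1 - μ bad := tsub_le_tsub_left hmarkov 1
    _ = μ badᶜ := by
        rw [measure_compl hbadmeas (measure_ne_top μ bad), measure_univ]
    _ ≤ _ := measure_mono hsubset
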